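/- For any monoid M and any k ≥ 0, the fiber relation ≡_{first_k} (p ≡_{first_k} p' iff first_k(p) = first_k(p')) is the smallest clone congruence of P(M) relating, for every choice of α_1, …, α_k, α_{k+1} ∈ M, the two words 1^{α_1} 2^e 1^{α_2} 3^e ⋯ 1^{α_k} (k+1)^e 1^{α_{k+1}} and 1^{α_1} 2^e 1^{α_2} 3^e ⋯ 1^{α_k} (k+1)^e of P(M)(k+1): ≡_{first_k} is a clone congruence relating each such pair, and every clone congruence of P(M) relating all such pairs contains ≡_{first_k}. -/

import Mathlib

/-- An `M`-pigmented word of arity `n`: a list of letters `(i, α)` whose value is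
`i ∈ Fin n` (representing the value `i + 1 ∈ {1, …, n}`) and whose pigment is `α ∈ M`. -/
abbrev PW (M : Type*) (n : ℕ) : Type _ := List (Fin n × M)

/-- The superposition `p⟨q 0, …, q (n-1)⟩` of pigmented words. -/
def pwSuper {M : Type*} [Monoid M] {n m : ℕ} (p : PW M n) (q : Fin n → PW M m) : PW M m :=
  p.flatMap (fun l => (q l.1).map (fun x => (x.1, l.2 * x.2)))

/-- A clone congruence of `P(M)`: an arity-indexed family of relations compatible
with the superposition maps. -/
def IsCloneCong {M : Type*} [Monoid M] (r : ∀ n, PW M n → PW M n → Prop) : Prop :=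
  ∀ ⦃n m : ℕ⦄ ⦃p p' : PW M n⦄ ⦃q q' : Fin n → PW M m⦄,
    r n p p' → (∀ i, r m (q i) (q' i)) → r m (pwSuper p q) (pwSuper p' q')

/-- `firstKAux k pre p` keeps those letters of `p` whose position is a left
`k`-witness, given that the prefix `pre` has already been read. -/
def firstKAux {M : Type*} {n : ℕ} (k : ℕ) : PW M n → PW M n → PW M n
  | _, [] => []
  | pre, l :: t =>
    if pre.countP (fun x => decide (x.1 = l.1)) < k
    then l :: firstKAux k (pre ++ [l]) t
    else firstKAux k (pre ++ [l]) t

/-- `firstK k p` keeps, for each value, the first `k` occurrences of that value in `p`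
(the letters at left `k`-witness positions). -/
def firstK {M : Type*} {n : ℕ} (k : ℕ) (p : PW M n) : PW M n := firstKAux k [] p

/-- The word `1^{α 0} 2^e 1^{α 1} 3^e ⋯ 1^{α (k-1)} (k+1)^e` of arity `k + 1`. -/
def chainW (M : Type*) [Monoid M] (k : ℕ) (α : Fin (k + 1) → M) : PW M (k + 1) :=
  (List.finRange k).flatMap
    (fun j => [((0 : Fin (k + 1)), α j.castSucc), (j.succ, (1 : M))])

/-- The word `1^{α 0} 2^e 1^{α 1} 3^e ⋯ 1^{α (k-1)} (k+1)^e 1^{α k}` of arity `k + 1`. -/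
def chainW' (M : Type*) [Monoid M] (k : ℕ) (α : Fin (k + 1) → M) : PW M (k + 1) :=
  chainW M k α ++ [((0 : Fin (k + 1)), α (Fin.last k))]

namespace Scratch
variable {M : Type*} {n : ℕ} {k : ℕ}

def cnt (i : Fin n) (l : PW M n) : ℕ := l.countP fun x => decide (x.1 = i)

@[simp] lemma cnt_nil (i : Fin n) : cnt i ([] : PW M n) = 0 := rfl
@[simp] lemma cnt_append (i : Fin n) (a b : PW M n) : cnt i (a ++ b) = cnt i a + cnt i b :=
  List.countP_append
lemma cnt_cons (i : Fin n) (l : Fin n × M) (t : PW M n) :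
    cnt i (l :: t) = (if l.1 = i then 1 else 0) + cnt i t := by
  simp [cnt, List.countP_cons]; by_cases h : l.1 = i <;> simp [h] <;> omega

lemma aux_append (k : ℕ) (a : PW M n) : ∀ (pre b : PW M n),
    firstKAux k pre (a ++ b) = firstKAux k pre a ++ firstKAux k (pre ++ a) b := by
  induction a with
  | nil => intro pre b; simp [firstKAux]
  | cons l t ih =>
    intro pre b
    simp only [List.cons_append, firstKAux]
    by_cases h : pre.countP (fun x => decide (x.1 = l.1)) < k <;>
      simp [h, ih (pre ++ [l]) b, List.append_assoc]

lemma aux_congr (k : ℕ) (p : PW M n) : ∀ (pre pre' : PW M n),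
    (∀ v, min k (cnt v pre) = min k (cnt v pre')) →
    firstKAux k pre p = firstKAux k pre' p := by
  induction p with
  | nil => intro _ _ _; rfl
  | cons l t ih =>
    intro pre pre' h
    have hc : (pre.countP (fun x => decide (x.1 = l.1)) < k) ↔
        (pre'.countP (fun x => decide (x.1 = l.1)) < k) := by
      have := h l.1
      simp only [cnt] at this
      omega
    have hrec : firstKAux k (pre ++ [l]) t = firstKAux k (pre' ++ [l]) t := by
      apply ih
      intro v
      have := h v
      simp only [cnt_append] at *
      have h1 : cnt v [l] = cnt v ([l] : PW M n) := rfl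
      omega
    simp only [firstKAux]
    by_cases hk : pre.countP (fun x => decide (x.1 = l.1)) < k
    · rw [if_pos hk, if_pos (hc.1 hk), hrec]
    · rw [if_neg hk, if_neg (fun hh => hk (hc.2 hh)), hrec]

lemma del (k : ℕ) (u : PW M n) (v : Fin n) (γ : M) (w : PW M n)
    (h : k ≤ cnt v u) :
    firstK k (u ++ (v, γ) :: w) = firstK k (u ++ w) := by
  unfold firstK
  rw [aux_append k u [] ((v,γ)::w), aux_append k u [] w]
  congr 1
  simp only [firstKAux, List.nil_append]
  rw [if_neg (by simp only [cnt] at h; omega)]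
  apply aux_congr
  intro v'
  simp only [cnt_append]
  by_cases hv : v' = v
  · have h1 : cnt v' [(v, γ)] = 1 := by simp [cnt, hv]
    have h2 : cnt v' u = cnt v u := by rw [hv]
    omega
  · have hvv : ¬ v = v' := fun h' => hv h'.symm
    have : cnt v' [(v, γ)] = 0 := by simp [cnt, hvv]
    omega

lemma snoc (k : ℕ) (u : PW M n) (l : Fin n × M) :
    firstK k (u ++ [l]) = firstK k u ++ if cnt l.1 u < k then [l] else [] := by
  unfold firstK
  rw [aux_append k u [] [l]]
  simp only [List.nil_append]
  congr 1


lemma drop (k : ℕ) (b : PW M n) : ∀ (a c : PW M n), (∀ l ∈ b, k ≤ cnt l.1 a) →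
    firstK k (a ++ b ++ c) = firstK k (a ++ c) := by
  induction b with
  | nil => simp
  | cons l t ih =>
    intro a c h
    have h1 : k ≤ cnt l.1 a := h l (by simp)
    calc firstK k (a ++ l :: t ++ c) = firstK k (a ++ (l.1, l.2) :: (t ++ c)) := by simp
    _ = firstK k (a ++ (t ++ c)) := del k a l.1 l.2 (t ++ c) h1
    _ = firstK k (a ++ t ++ c) := by rw [List.append_assoc]
    _ = firstK k (a ++ c) := ih a c (fun l' hl' => h l' (by simp [hl']))

variable [Monoid M]

def pig (α : M) (a : PW M n) : PW M n := a.map fun x => (x.1, α * x.2)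

@[simp] lemma pig_nil (α : M) : pig α ([] : PW M n) = [] := rfl
@[simp] lemma pig_append (α : M) (a b : PW M n) : pig α (a ++ b) = pig α a ++ pig α b :=
  List.map_append
@[simp] lemma pig_cons (α : M) (l : Fin n × M) (t : PW M n) :
    pig α (l :: t) = (l.1, α * l.2) :: pig α t := rfl
@[simp] lemma cnt_pig (i : Fin n) (α : M) (a : PW M n) : cnt i (pig α a) = cnt i a := by
  simp only [cnt, pig, List.countP_map]
  rfl

lemma mem_pig_cnt {l' : Fin n × M} {α : M} {a : PW M n} (h : l' ∈ pig α a) :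
    1 ≤ cnt l'.1 a := by
  simp only [pig, List.mem_map] at h
  obtain ⟨x, hx, hx2⟩ := h
  have : x.1 = l'.1 := by rw [← hx2]
  rw [← this]
  have : 0 < cnt x.1 a := by
    rw [cnt, List.countP_pos_iff]
    exact ⟨x, hx, by simp⟩
  omega

lemma main_pig (k : ℕ) (a : PW M n) : ∀ (x y : PW M n) (α : M),
    firstK k (x ++ pig α a ++ y) = firstK k (x ++ pig α (firstK k a) ++ y) := by
  induction a using List.reverseRecOn with
  | nil => intro x y α; rfl
  | append_singleton u l ih =>
    intro x y α
    rw [snoc k u l]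
    by_cases h : cnt l.1 u < k
    · rw [if_pos h]
      have e1 : x ++ pig α (u ++ [l]) ++ y = x ++ pig α u ++ ((l.1, α * l.2) :: y) := by
        simp [pig]
      have e2 : x ++ pig α (firstK k u ++ [l]) ++ y
          = x ++ pig α (firstK k u) ++ ((l.1, α * l.2) :: y) := by simp [pig]
      rw [e1, e2]
      exact ih x ((l.1, α * l.2) :: y) α
    · rw [if_neg h, List.append_nil]
      have hc : k ≤ cnt l.1 (x ++ pig α u) := by
        simp only [cnt_append, cnt_pig]; omega
      calc firstK k (x ++ pig α (u ++ [l]) ++ y)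
          = firstK k ((x ++ pig α u) ++ (l.1, α * l.2) :: y) := by simp [pig]
        _ = firstK k ((x ++ pig α u) ++ y) := del k _ l.1 (α * l.2) y hc
        _ = firstK k (x ++ pig α (firstK k u) ++ y) := by
            exact ih x y α

variable {m : ℕ}

@[simp] lemma pwSuper_nil (q : Fin n → PW M m) : pwSuper ([] : PW M n) q = [] := rfl

lemma pwSuper_cons (l : Fin n × M) (t : PW M n) (q : Fin n → PW M m) :
    pwSuper (l :: t) q = pig l.2 (q l.1) ++ pwSuper t q := rfl

lemma pwSuper_append (a b : PW M n) (q : Fin n → PW M m) :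
    pwSuper (a ++ b) q = pwSuper a q ++ pwSuper b q := List.flatMap_append

lemma cnt_pwSuper (q : Fin n → PW M m) (i : Fin n) (w : Fin m) (hw : 1 ≤ cnt w (q i)) :
    ∀ u : PW M n, cnt i u ≤ cnt w (pwSuper u q) := by
  intro u
  induction u with
  | nil => simp
  | cons l t ih =>
    rw [pwSuper_cons, cnt_append, cnt_cons, cnt_pig]
    split
    · rename_i h; rw [h]; omega
    · omega

lemma K1 (k : ℕ) (q : Fin n → PW M m) (p : PW M n) : ∀ (y : PW M m),
    firstK k (pwSuper p q ++ y) = firstK k (pwSuper (firstK k p) q ++ y) := by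
  induction p using List.reverseRecOn with
  | nil => intro y; rfl
  | append_singleton u l ih =>
    intro y
    rw [snoc k u l, pwSuper_append]
    by_cases h : cnt l.1 u < k
    · rw [if_pos h, pwSuper_append]
      have e : pwSuper [l] q ++ y = pig l.2 (q l.1) ++ y := by
        simp [pwSuper_cons, pwSuper_nil]
      rw [List.append_assoc, List.append_assoc, e, ih (pig l.2 (q l.1) ++ y)]
    · rw [if_neg h, List.append_nil]
      have e : pwSuper [l] q = pig l.2 (q l.1) := by
        simp [pwSuper_cons, pwSuper_nil]
      rw [List.append_assoc, e, ← List.append_assoc]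
      have hdrop : firstK k (pwSuper u q ++ pig l.2 (q l.1) ++ y)
          = firstK k (pwSuper u q ++ y) := by
        apply drop
        intro l' hl'
        have h1 : 1 ≤ cnt l'.1 (q l.1) := mem_pig_cnt hl'
        have h2 : cnt l.1 u ≤ cnt l'.1 (pwSuper u q) := cnt_pwSuper q l.1 l'.1 h1 u
        omega
      rw [hdrop, ih y]

lemma K2 (k : ℕ) (q : Fin n → PW M m) (y : PW M m) : ∀ (p : PW M n) (x : PW M m),
    firstK k (x ++ pwSuper p q ++ y)
      = firstK k (x ++ pwSuper p (fun i => firstK k (q i)) ++ y) := by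
  intro p
  induction p with
  | nil => intro x; rfl
  | cons l t ih =>
    intro x
    rw [pwSuper_cons, pwSuper_cons]
    calc firstK k (x ++ (pig l.2 (q l.1) ++ pwSuper t q) ++ y)
        = firstK k (x ++ pig l.2 (q l.1) ++ (pwSuper t q ++ y)) := by
          simp [List.append_assoc]
      _ = firstK k (x ++ pig l.2 (firstK k (q l.1)) ++ (pwSuper t q ++ y)) := by
          rw [main_pig k (q l.1) x (pwSuper t q ++ y) l.2]
      _ = firstK k ((x ++ pig l.2 (firstK k (q l.1))) ++ pwSuper t q ++ y) := by
          simp [List.append_assoc]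
      _ = firstK k ((x ++ pig l.2 (firstK k (q l.1)))
            ++ pwSuper t (fun i => firstK k (q i)) ++ y) := ih _
      _ = firstK k (x ++ (pig l.2 (firstK k (q l.1))
            ++ pwSuper t (fun i => firstK k (q i))) ++ y) := by
          simp [List.append_assoc]

lemma fiber_cong (k : ℕ) {p p' : PW M n} {q q' : Fin n → PW M m}
    (hp : firstK k p = firstK k p') (hq : ∀ i, firstK k (q i) = firstK k (q' i)) :
    firstK k (pwSuper p q) = firstK k (pwSuper p' q') := by
  have e1 : firstK k (pwSuper p q) = firstK k (pwSuper (firstK k p) (fun i => firstK k (q i))) := by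
    have := K1 k q p []
    simp only [List.append_nil] at this
    rw [this]
    have := K2 k q [] (firstK k p) []
    simp only [List.append_nil, List.nil_append] at this
    rw [this]
  have e2 : firstK k (pwSuper p' q')
      = firstK k (pwSuper (firstK k p') (fun i => firstK k (q' i))) := by
    have := K1 k q' p' []
    simp only [List.append_nil] at this
    rw [this]
    have := K2 k q' [] (firstK k p') []
    simp only [List.append_nil, List.nil_append] at this
    rw [this]
  rw [e1, e2, hp]
  have : (fun i => firstK k (q i)) = fun i => firstK k (q' i) := funext hq
  rw [this]

@[simp] lemma pig_one (a : PW M n) : pig (1 : M) a = a := by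
  simp [pig]

lemma cnt_zero_chainW {k : ℕ} (α : Fin (k+1) → M) :
    cnt (0 : Fin (k+1)) (chainW M k α) = k := by
  unfold chainW
  have : ∀ L : List (Fin k),
      cnt (0 : Fin (k+1)) (L.flatMap fun j => [((0 : Fin (k+1)), α j.castSucc), (j.succ, (1:M))])
        = L.length := by
    intro L
    induction L with
    | nil => rfl
    | cons j t ih =>
      rw [List.flatMap_cons, cnt_append, ih]
      have : cnt (0 : Fin (k+1)) [((0 : Fin (k+1)), α j.castSucc), (j.succ, (1:M))] = 1 := by
        simp [cnt, List.countP_cons, Fin.succ_ne_zero]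
      rw [this]
      simp [Nat.add_comm]
  rw [this, List.length_finRange]

lemma firstK_chain {k : ℕ} (α : Fin (k+1) → M) :
    firstK k (chainW' M k α) = firstK k (chainW M k α) := by
  unfold chainW'
  rw [snoc k _ _]
  rw [if_neg (by rw [cnt_zero_chainW]; omega), List.append_nil]

lemma decomp : ∀ (u : PW M n) (k : ℕ) (i : Fin n), k ≤ cnt i u →
    ∃ (s : Fin (k+1) → PW M n) (β : Fin k → M),
      u = s 0 ++ (List.finRange k).flatMap (fun j => (i, β j) :: s j.succ) := by
  intro u
  induction u with
  | nil =>
    intro k i h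
    have hk : k = 0 := by simp [cnt] at h; omega
    subst hk
    exact ⟨fun _ => [], fun j => j.elim0, by simp [List.finRange_zero]⟩
  | cons l t ih =>
    intro k i h
    cases k with
    | zero => exact ⟨fun _ => l :: t, fun j => j.elim0, by simp [List.finRange_zero]⟩
    | succ k' =>
      by_cases hl : l.1 = i
      · have h' : k' ≤ cnt i t := by rw [cnt_cons, if_pos hl] at h; omega
        obtain ⟨s', β', he⟩ := ih k' i h'
        refine ⟨Fin.cases [] s', Fin.cases l.2 β', ?_⟩
        rw [List.finRange_succ, List.flatMap_cons, List.flatMap_map]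
        have efun : (fun j : Fin k' =>
            (i, Fin.cases (motive := fun _ => M) l.2 β' j.succ)
              :: Fin.cases (motive := fun _ => PW M n) [] s' j.succ.succ)
            = fun j : Fin k' => (i, β' j) :: s' j.succ := by
          funext j
          rw [Fin.cases_succ, Fin.cases_succ]
        show l :: t = Fin.cases [] s' 0
            ++ (((i, Fin.cases (motive := fun _ => M) l.2 β' 0)
              :: Fin.cases (motive := fun _ => PW M n) [] s' (Fin.succ 0))
            ++ (List.finRange k').flatMap fun j =>
              (i, Fin.cases (motive := fun _ => M) l.2 β' j.succ)
                :: Fin.cases (motive := fun _ => PW M n) [] s' j.succ.succ)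
        rw [Fin.cases_zero, Fin.cases_zero, Fin.cases_succ]
        rw [show ((List.finRange k').flatMap fun j =>
              (i, Fin.cases (motive := fun _ => M) l.2 β' j.succ)
                :: Fin.cases (motive := fun _ => PW M n) [] s' j.succ.succ)
            = (List.finRange k').flatMap fun j : Fin k' => (i, β' j) :: s' j.succ from by
          rw [efun]]
        have hll : (i, l.2) = l := by rw [← hl]
        rw [List.nil_append, hll, he]
        simp [List.append_assoc]
      · have h' : k' + 1 ≤ cnt i t := by rw [cnt_cons, if_neg hl] at h; omega
        obtain ⟨s, β, he⟩ := ih (k' + 1) i h'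
        refine ⟨Function.update s 0 (l :: s 0), β, ?_⟩
        have efun : (fun j : Fin (k'+1) => (i, β j) :: Function.update s 0 (l :: s 0) j.succ)
            = fun j => (i, β j) :: s j.succ := by
          funext j
          rw [Function.update_of_ne (Fin.succ_ne_zero j)]
        rw [efun, Function.update_self, he]
        rfl

lemma pwSuper_chainW {k : ℕ} (α : Fin (k+1) → M) (i : Fin n) (s' : Fin k → PW M n) :
    pwSuper (chainW M k α) (Fin.cases [(i, (1:M))] s')
      = (List.finRange k).flatMap (fun j => (i, α j.castSucc) :: s' j) := by
  unfold chainW pwSuper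
  rw [List.flatMap_assoc]
  congr 1
  funext j
  rw [List.flatMap_cons, List.flatMap_cons, List.flatMap_nil]
  show (Fin.cases (motive := fun _ => PW M n) [(i, (1:M))] s' 0).map _
      ++ ((Fin.cases (motive := fun _ => PW M n) [(i, (1:M))] s' j.succ).map _ ++ []) = _
  rw [Fin.cases_zero, Fin.cases_succ, List.append_nil]
  simp [mul_one, one_mul]

lemma pwSuper_chainW' {k : ℕ} (α : Fin (k+1) → M) (i : Fin n) (s' : Fin k → PW M n) :
    pwSuper (chainW' M k α) (Fin.cases [(i, (1:M))] s')
      = pwSuper (chainW M k α) (Fin.cases [(i, (1:M))] s') ++ [(i, α (Fin.last k))] := by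
  unfold chainW'
  rw [pwSuper_append]
  congr 1
  show pig (α (Fin.last k)) (Fin.cases (motive := fun _ => PW M n) [(i, (1:M))] s' 0) ++ [] = _
  rw [Fin.cases_zero, List.append_nil]
  simp [pig, mul_one]

section Smallest

variable {r : ∀ n, PW M n → PW M n → Prop}
variable (hE : ∀ n, Equivalence (r n)) (hC : IsCloneCong r)

include hE hC in
lemma r_append {a a' b b' : PW M m} (ha : r m a a') (hb : r m b b') :
    r m (a ++ b) (a' ++ b') := by
  have key : ∀ (c d : PW M m),
      pwSuper ([((0 : Fin 2), (1:M)), (1, (1:M))] : PW M 2) ![c, d] = c ++ d := by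
    intro c d
    show pig 1 (![c,d] 0) ++ (pig 1 (![c,d] 1) ++ []) = c ++ d
    simp [Matrix.cons_val_zero, Matrix.cons_val_one, Matrix.head_cons]
  have := hC ((hE 2).refl ([((0 : Fin 2), (1:M)), (1, (1:M))] : PW M 2))
    (q := ![a, b]) (q' := ![a', b']) ?_
  · rwa [key, key] at this
  · intro i
    match i with
    | 0 => exact ha
    | 1 => exact hb

variable {k : ℕ} (hgen : ∀ α : Fin (k + 1) → M, r (k + 1) (chainW' M k α) (chainW M k α))

include hE hC hgen in
lemma r_drop {u : PW M n} {i : Fin n} {β : M} (h : k ≤ cnt i u) :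
    r n (u ++ [(i, β)]) u := by
  obtain ⟨s, βs, he⟩ := decomp u k i h
  have hT : pwSuper (chainW M k (Fin.lastCases β βs)) (Fin.cases [(i, (1:M))] fun j => s j.succ)
      = (List.finRange k).flatMap (fun j => (i, βs j) :: s j.succ) := by
    rw [pwSuper_chainW]
    congr 1
    funext j
    rw [Fin.lastCases_castSucc]
  have hT' : pwSuper (chainW' M k (Fin.lastCases β βs)) (Fin.cases [(i, (1:M))] fun j => s j.succ)
      = pwSuper (chainW M k (Fin.lastCases β βs)) (Fin.cases [(i, (1:M))] fun j => s j.succ)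
        ++ [(i, β)] := by
    rw [pwSuper_chainW']
    congr 3
    rw [Fin.lastCases_last]
  have h1 := hC (q := Fin.cases [(i, (1:M))] fun j => s j.succ)
    (q' := Fin.cases [(i, (1:M))] fun j => s j.succ)
    (hgen (Fin.lastCases β βs)) (fun j => (hE n).refl _)
  rw [hT', hT] at h1
  have h2 := r_append hE hC ((hE n).refl (s 0)) h1
  rw [← List.append_assoc, ← he] at h2
  exact h2

include hE hC hgen in
lemma r_firstK (p : PW M n) : r n p (firstK k p) := by
  induction p using List.reverseRecOn with
  | nil => exact (hE n).refl []
  | append_singleton u l ih =>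
    rw [snoc k u l]
    by_cases h : cnt l.1 u < k
    · rw [if_pos h]
      exact r_append hE hC ih ((hE n).refl [l])
    · rw [if_neg h, List.append_nil]
      have hd : r n (u ++ [(l.1, l.2)]) u := r_drop hE hC hgen (by omega)
      rw [Prod.mk.eta] at hd
      exact (hE n).trans hd ih

end Smallest

end Scratch

/-- The fiber relation of `firstK k` is the smallest clone congruence of `P(M)`
relating, for all `α_1, …, α_{k+1} ∈ M`, the word
`1^{α_1} 2^e 1^{α_2} 3^e ⋯ 1^{α_k} (k+1)^e 1^{α_{k+1}}` with the word
`1^{α_1} 2^e 1^{α_2} 3^e ⋯ 1^{α_k} (k+1)^e`. -/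
theorem firstK_smallest_cloneCongruence (M : Type*) [Monoid M] (k : ℕ) :
    (∀ n, Equivalence (fun p p' : PW M n => firstK k p = firstK k p')) ∧
    IsCloneCong (fun n (p p' : PW M n) => firstK k p = firstK k p') ∧
    (∀ α : Fin (k + 1) → M, firstK k (chainW' M k α) = firstK k (chainW M k α)) ∧
    (∀ r : ∀ n, PW M n → PW M n → Prop, (∀ n, Equivalence (r n)) → IsCloneCong r →
      (∀ α : Fin (k + 1) → M, r (k + 1) (chainW' M k α) (chainW M k α)) →
      ∀ (n : ℕ) (p p' : PW M n), firstK k p = firstK k p' → r n p p') := by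
  refine ⟨fun n => ⟨fun _ => rfl, fun h => h.symm, fun h h' => h.trans h'⟩, ?_, ?_, ?_⟩
  · intro n m p p' q q' hp hq
    exact Scratch.fiber_cong k hp hq
  · exact fun α => Scratch.firstK_chain α
  · intro r hE hC hgen n p p' hpp
    have h1 := Scratch.r_firstK hE hC hgen p
    have h2 := Scratch.r_firstK hE hC hgen p'
    rw [hpp] at h1
    exact (hE n).trans h1 ((hE n).symm h2)
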